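/- For every integer n, the canonical-form integer game n plus its conjugate is equivalent to 0 modulo the universe of dead-ending games: n + conj(n) ≡ 0 (mod E). -/

import Mathlib

namespace SetTheory

universe u

/-- Pre-games, as defined in the older Mathlib (`SetTheory.PGame`, removed since). -/
inductive PGame : Type (u + 1)
  | mk : ∀ α β : Type u, (α → PGame) → (β → PGame) → PGame

namespace PGame

def LeftMoves : PGame → Type u
  | mk l _ _ _ => l

def RightMoves : PGame → Type u
  | mk _ r _ _ => r

def moveLeft : ∀ g : PGame, LeftMoves g → PGame
  | mk _l _ L _ => L

def moveRight : ∀ g : PGame, RightMoves g → PGame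
  | mk _ _r _ R => R

inductive IsOption : PGame → PGame → Prop
  | moveLeft {x : PGame} (i : x.LeftMoves) : IsOption (x.moveLeft i) x
  | moveRight {x : PGame} (i : x.RightMoves) : IsOption (x.moveRight i) x

instance : Zero PGame :=
  ⟨⟨PEmpty, PEmpty, PEmpty.elim, PEmpty.elim⟩⟩

def neg : PGame → PGame
  | ⟨l, r, L, R⟩ => ⟨r, l, fun i => neg (R i), fun i => neg (L i)⟩

instance : Neg PGame :=
  ⟨neg⟩

noncomputable instance : Add PGame.{u} :=
  ⟨fun x y => by
    induction x generalizing y with | mk xl xr _ _ IHxl IHxr => _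
    induction y with | mk yl yr yL yR IHyl IHyr => _
    have y := mk yl yr yL yR
    refine ⟨xl ⊕ yl, xr ⊕ yr, Sum.rec ?_ ?_, Sum.rec ?_ ?_⟩
    · exact fun i => IHxl i y
    · exact IHyl
    · exact fun i => IHxr i y
    · exact IHyr⟩

end PGame

end SetTheory

open SetTheory

namespace Misere

/-- `F` is a follower of `G`: reachable from `G` by a (possibly empty) sequence of moves. -/
def Follower (F G : PGame) : Prop := Relation.ReflTransGen PGame.IsOption F G

def IsLeftEnd (G : PGame) : Prop := IsEmpty G.LeftMoves
def IsRightEnd (G : PGame) : Prop := IsEmpty G.RightMoves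

/-- A dead left end: every follower (including itself) is a left end. -/
def DeadLeftEnd (G : PGame) : Prop := ∀ F, Follower F G → IsLeftEnd F
def DeadRightEnd (G : PGame) : Prop := ∀ F, Follower F G → IsRightEnd F
def DeadEnd (G : PGame) : Prop := DeadLeftEnd G ∨ DeadRightEnd G

/-- A game is dead-ending if every end follower is a dead end. -/
def DeadEnding (G : PGame) : Prop :=
  ∀ F, Follower F G → (IsLeftEnd F → DeadLeftEnd F) ∧ (IsRightEnd F → DeadRightEnd F)

/-- The universe of dead-ending games. -/
def E : Set PGame := {G | DeadEnding G}

/-- `(misereWins G).1` : Left, moving first, wins `G` under misère play;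
    `(misereWins G).2` : Right, moving first, wins `G` under misère play. -/
def misereWins : PGame → Prop × Prop
  | PGame.mk l r L R =>
      (IsEmpty l ∨ ∃ i, ¬ (misereWins (L i)).2,
       IsEmpty r ∨ ∃ j, ¬ (misereWins (R j)).1)

def LeftWinsGF (G : PGame) : Prop := (misereWins G).1
def RightWinsGF (G : PGame) : Prop := (misereWins G).2

inductive MOutcome : Type
  | L | N | P | R
deriving DecidableEq

/-- Partial order on misère outcomes: `R` minimal, `L` maximal, `N` and `P` incomparable. -/
def MOutcome.le : MOutcome → MOutcome → Prop
  | .R, _ => True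
  | _, .L => True
  | a, b => a = b

instance : LE MOutcome := ⟨MOutcome.le⟩

/-- The misère outcome of a game. -/
noncomputable def outcome (G : PGame) : MOutcome := by
  classical
  exact if LeftWinsGF G then (if RightWinsGF G then .N else .L)
        else (if RightWinsGF G then .R else .P)

/-- `G ≡ H (mod U)`. -/
def equivMod (U : Set PGame) (G H : PGame) : Prop :=
  ∀ X ∈ U, outcome (G + X) = outcome (H + X)

/-- `G ≧ H (mod U)`. -/
def geMod (U : Set PGame) (G H : PGame) : Prop :=
  ∀ X ∈ U, outcome (H + X) ≤ outcome (G + X)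

/-- `LeftChain G n`: there is a sequence of `n` consecutive Left moves from `G`
ending at the zero position. -/
inductive LeftChain : PGame → ℕ → Prop
  | zero (G : PGame) : IsLeftEnd G → IsRightEnd G → LeftChain G 0
  | succ (G : PGame) (i : G.LeftMoves) (n : ℕ) :
      LeftChain (G.moveLeft i) n → LeftChain G (n + 1)

inductive RightChain : PGame → ℕ → Prop
  | zero (G : PGame) : IsLeftEnd G → IsRightEnd G → RightChain G 0
  | succ (G : PGame) (j : G.RightMoves) (n : ℕ) :
      RightChain (G.moveRight j) n → RightChain G (n + 1)

/-- Left-length: minimum number of consecutive Left moves needed to reach zero. -/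
noncomputable def leftLength (G : PGame) : ℕ := sInf {n | LeftChain G n}

/-- Right-length: minimum number of consecutive Right moves needed to reach zero. -/
noncomputable def rightLength (G : PGame) : ℕ := sInf {n | RightChain G n}

/-- Normal-play canonical form of a nonnegative integer. -/
def natGame : ℕ → PGame
  | 0 => 0
  | n + 1 => PGame.mk PUnit PEmpty (fun _ => natGame n) PEmpty.elim

/-- Normal-play canonical form of an integer (negatives are conjugates). -/
def intGame (n : ℤ) : PGame :=
  if 0 ≤ n then natGame n.toNat else -natGame (-n).toNat

/-- Normal-play canonical form of the dyadic rational `m / 2 ^ j`. -/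
def dyadicGame : ℤ → ℕ → PGame
  | m, 0 => intGame m
  | m, j + 1 =>
      if m % 2 = 0 then dyadicGame (m / 2) j
      else PGame.mk PUnit PUnit (fun _ => dyadicGame ((m - 1) / 2) j)
            (fun _ => dyadicGame ((m + 1) / 2) j)

/-- The closure of dead ends: finite disjunctive sums of dead ends. -/
def DeadEndClosure : Set PGame :=
  {G | ∃ l : List PGame, (∀ x ∈ l, DeadEnd x) ∧ G = l.sum}

end Misere

namespace SetTheory.PGame

theorem leftMoves_add : ∀ (x y : PGame), (x + y).LeftMoves = (x.LeftMoves ⊕ y.LeftMoves)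
  | ⟨_, _, _, _⟩, ⟨_, _, _, _⟩ => rfl

theorem rightMoves_add : ∀ (x y : PGame), (x + y).RightMoves = (x.RightMoves ⊕ y.RightMoves)
  | ⟨_, _, _, _⟩, ⟨_, _, _, _⟩ => rfl

def toLeftMovesAdd {x y : PGame} : x.LeftMoves ⊕ y.LeftMoves ≃ (x + y).LeftMoves :=
  Equiv.cast (leftMoves_add x y).symm

def toRightMovesAdd {x y : PGame} : x.RightMoves ⊕ y.RightMoves ≃ (x + y).RightMoves :=
  Equiv.cast (rightMoves_add x y).symm

theorem add_moveLeft_inl {x : PGame} (y : PGame) (i : x.LeftMoves) :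
    (x + y).moveLeft (toLeftMovesAdd (Sum.inl i)) = x.moveLeft i + y := by
  cases x; cases y; rfl

theorem add_moveLeft_inr (x : PGame) {y : PGame} (i : y.LeftMoves) :
    (x + y).moveLeft (toLeftMovesAdd (Sum.inr i)) = x + y.moveLeft i := by
  cases x; cases y; rfl

theorem add_moveRight_inl {x : PGame} (y : PGame) (i : x.RightMoves) :
    (x + y).moveRight (toRightMovesAdd (Sum.inl i)) = x.moveRight i + y := by
  cases x; cases y; rfl

theorem add_moveRight_inr (x : PGame) {y : PGame} (i : y.RightMoves) :
    (x + y).moveRight (toRightMovesAdd (Sum.inr i)) = x + y.moveRight i := by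
  cases x; cases y; rfl

theorem leftMoves_add_cases {x y : PGame} (k : (x + y).LeftMoves) {P : (x + y).LeftMoves → Prop}
    (hl : ∀ i, P (toLeftMovesAdd (Sum.inl i))) (hr : ∀ i, P (toLeftMovesAdd (Sum.inr i))) : P k := by
  rw [← toLeftMovesAdd.apply_symm_apply k]
  rcases toLeftMovesAdd.symm k with i | i
  · exact hl i
  · exact hr i

theorem rightMoves_add_cases {x y : PGame} (k : (x + y).RightMoves) {P : (x + y).RightMoves → Prop}
    (hl : ∀ i, P (toRightMovesAdd (Sum.inl i))) (hr : ∀ i, P (toRightMovesAdd (Sum.inr i))) : P k := by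
  rw [← toRightMovesAdd.apply_symm_apply k]
  rcases toRightMovesAdd.symm k with i | i
  · exact hl i
  · exact hr i

instance isEmpty_zero_leftMoves : IsEmpty (0 : PGame).LeftMoves := inferInstanceAs (IsEmpty PEmpty)

instance isEmpty_zero_rightMoves : IsEmpty (0 : PGame).RightMoves := inferInstanceAs (IsEmpty PEmpty)

theorem neg_zero : -(0 : PGame) = 0 := by
  show PGame.mk _ _ _ _ = PGame.mk _ _ _ _
  congr 1 <;> funext i <;> exact PEmpty.elim i

theorem neg_neg : ∀ x : PGame, - -x = x
  | mk l r L R => by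
    show PGame.mk _ _ _ _ = PGame.mk _ _ _ _
    congr 1 <;> funext i <;> exact neg_neg _

theorem wf_isOption : WellFounded IsOption :=
  ⟨fun x => by
    induction x with
    | mk l r L R IHl IHr =>
      exact Acc.intro _ (fun y h => by
        cases h with
        | moveLeft i => exact IHl i
        | moveRight j => exact IHr j)⟩

def Subsequent : PGame → PGame → Prop := Relation.TransGen IsOption

theorem wf_subsequent : WellFounded Subsequent := wf_isOption.transGen

instance : WellFoundedRelation PGame := ⟨Subsequent, wf_subsequent⟩

theorem Subsequent.moveLeft {x : PGame} (i : x.LeftMoves) : Subsequent (x.moveLeft i) x :=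
  Relation.TransGen.single (IsOption.moveLeft i)

theorem Subsequent.moveRight {x : PGame} (j : x.RightMoves) : Subsequent (x.moveRight j) x :=
  Relation.TransGen.single (IsOption.moveRight j)

end SetTheory.PGame

-- ===== auxiliary development for stmt6 =====
namespace Misere

/-! ### Unfolding lemmas for `misereWins` -/

lemma lw_def (G : PGame) :
    LeftWinsGF G ↔ IsEmpty G.LeftMoves ∨ ∃ i, ¬ RightWinsGF (G.moveLeft i) := by
  cases G; exact Iff.rfl

lemma rw_def (G : PGame) :
    RightWinsGF G ↔ IsEmpty G.RightMoves ∨ ∃ j, ¬ LeftWinsGF (G.moveRight j) := by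
  cases G; exact Iff.rfl

lemma exists_leftMoves_add {A B : PGame} {p : PGame → Prop} :
    (∃ k, p ((A + B).moveLeft k)) ↔ (∃ i, p (A.moveLeft i + B)) ∨ (∃ j, p (A + B.moveLeft j)) := by
  constructor
  · rintro ⟨k, hk⟩
    refine PGame.leftMoves_add_cases
      (P := fun k => p ((A + B).moveLeft k) →
        (∃ i, p (A.moveLeft i + B)) ∨ (∃ j, p (A + B.moveLeft j)))
      k (fun i hi => ?_) (fun j hj => ?_) hk
    · exact Or.inl ⟨i, by rwa [PGame.add_moveLeft_inl] at hi⟩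
    · exact Or.inr ⟨j, by rwa [PGame.add_moveLeft_inr] at hj⟩
  · rintro (⟨i, hi⟩ | ⟨j, hj⟩)
    · exact ⟨PGame.toLeftMovesAdd (Sum.inl i), by rwa [PGame.add_moveLeft_inl]⟩
    · exact ⟨PGame.toLeftMovesAdd (Sum.inr j), by rwa [PGame.add_moveLeft_inr]⟩

lemma exists_rightMoves_add {A B : PGame} {p : PGame → Prop} :
    (∃ k, p ((A + B).moveRight k)) ↔ (∃ i, p (A.moveRight i + B)) ∨ (∃ j, p (A + B.moveRight j)) := by
  constructor
  · rintro ⟨k, hk⟩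
    refine PGame.rightMoves_add_cases
      (P := fun k => p ((A + B).moveRight k) →
        (∃ i, p (A.moveRight i + B)) ∨ (∃ j, p (A + B.moveRight j)))
      k (fun i hi => ?_) (fun j hj => ?_) hk
    · exact Or.inl ⟨i, by rwa [PGame.add_moveRight_inl] at hi⟩
    · exact Or.inr ⟨j, by rwa [PGame.add_moveRight_inr] at hj⟩
  · rintro (⟨i, hi⟩ | ⟨j, hj⟩)
    · exact ⟨PGame.toRightMovesAdd (Sum.inl i), by rwa [PGame.add_moveRight_inl]⟩
    · exact ⟨PGame.toRightMovesAdd (Sum.inr j), by rwa [PGame.add_moveRight_inr]⟩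

lemma isEmpty_lm_add {A B : PGame} :
    IsEmpty (A + B).LeftMoves ↔ IsEmpty A.LeftMoves ∧ IsEmpty B.LeftMoves := by
  rw [PGame.leftMoves_add, isEmpty_sum]

lemma isEmpty_rm_add {A B : PGame} :
    IsEmpty (A + B).RightMoves ↔ IsEmpty A.RightMoves ∧ IsEmpty B.RightMoves := by
  rw [PGame.rightMoves_add, isEmpty_sum]

lemma lw_add_iff (A B : PGame) :
    LeftWinsGF (A + B) ↔ (IsEmpty A.LeftMoves ∧ IsEmpty B.LeftMoves)
      ∨ (∃ i, ¬ RightWinsGF (A.moveLeft i + B)) ∨ (∃ j, ¬ RightWinsGF (A + B.moveLeft j)) := by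
  rw [lw_def, isEmpty_lm_add,
    exists_leftMoves_add (A := A) (B := B) (p := fun G => ¬ RightWinsGF G)]

lemma rw_add_iff (A B : PGame) :
    RightWinsGF (A + B) ↔ (IsEmpty A.RightMoves ∧ IsEmpty B.RightMoves)
      ∨ (∃ i, ¬ LeftWinsGF (A.moveRight i + B)) ∨ (∃ j, ¬ LeftWinsGF (A + B.moveRight j)) := by
  rw [rw_def, isEmpty_rm_add,
    exists_rightMoves_add (A := A) (B := B) (p := fun G => ¬ LeftWinsGF G)]

/-! ### Structure of `natGame` and its negation -/

lemma natGame_rm_empty (a : ℕ) : IsEmpty (natGame a).RightMoves := by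
  cases a
  · exact PGame.isEmpty_zero_rightMoves
  · exact inferInstanceAs (IsEmpty PEmpty)

lemma negNat_lm_empty (b : ℕ) : IsEmpty (-natGame b).LeftMoves := by
  cases b
  · rw [show natGame 0 = 0 from rfl, PGame.neg_zero]; exact PGame.isEmpty_zero_leftMoves
  · exact inferInstanceAs (IsEmpty PEmpty)

end Misere

namespace Misere

/-! ### Unfolding the triple sums `(natGame a + -natGame b) + X` and mirrored -/

lemma natSum_lm_empty_iff (a b : ℕ) :
    IsEmpty (natGame a + -natGame b).LeftMoves ↔ a = 0 := by
  rw [isEmpty_lm_add]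
  cases a with
  | zero => exact iff_of_true ⟨PGame.isEmpty_zero_leftMoves, negNat_lm_empty b⟩ rfl
  | succ a' =>
      refine iff_of_false (fun h => h.1.elim' PUnit.unit) (by omega)

lemma natSum_rm_empty_iff (a b : ℕ) :
    IsEmpty (natGame a + -natGame b).RightMoves ↔ b = 0 := by
  rw [isEmpty_rm_add]
  cases b with
  | zero =>
      refine iff_of_true ⟨natGame_rm_empty a, ?_⟩ rfl
      rw [show natGame 0 = 0 from rfl, PGame.neg_zero]; exact PGame.isEmpty_zero_rightMoves
  | succ b' =>
      refine iff_of_false (fun h => h.2.elim' PUnit.unit) (by omega)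

lemma natSum_lm_empty_iff' (b a : ℕ) :
    IsEmpty (-natGame b + natGame a).LeftMoves ↔ a = 0 := by
  rw [isEmpty_lm_add, and_comm, ← isEmpty_lm_add (A := natGame a) (B := -natGame b)]
  exact natSum_lm_empty_iff a b

lemma natSum_rm_empty_iff' (b a : ℕ) :
    IsEmpty (-natGame b + natGame a).RightMoves ↔ b = 0 := by
  rw [isEmpty_rm_add, and_comm, ← isEmpty_rm_add (A := natGame a) (B := -natGame b)]
  exact natSum_rm_empty_iff a b

lemma exists_natSum_left {a b : ℕ} {p : PGame → Prop} :
    (∃ k, p ((natGame a + -natGame b).moveLeft k)) ↔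
      ∃ a', a = a' + 1 ∧ p (natGame a' + -natGame b) := by
  rw [exists_leftMoves_add]
  cases a with
  | zero =>
      simp only [(negNat_lm_empty b).exists_iff, or_false]
      exact iff_of_false (fun ⟨i, _⟩ => (PGame.isEmpty_zero_leftMoves).elim' i)
        (by rintro ⟨a', h, _⟩; omega)
  | succ a' =>
      simp only [(negNat_lm_empty b).exists_iff, or_false]
      constructor
      · rintro ⟨i, hi⟩; exact ⟨a', rfl, hi⟩
      · rintro ⟨a'', h, hp⟩
        obtain rfl : a'' = a' := by omega
        exact ⟨PUnit.unit, hp⟩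

lemma exists_natSum_right {a b : ℕ} {p : PGame → Prop} :
    (∃ k, p ((natGame a + -natGame b).moveRight k)) ↔
      ∃ b', b = b' + 1 ∧ p (natGame a + -natGame b') := by
  rw [exists_rightMoves_add]
  cases b with
  | zero =>
      simp only [(natGame_rm_empty a).exists_iff, false_or]
      refine iff_of_false (fun ⟨j, _⟩ => ?_) (by rintro ⟨b', h, _⟩; omega)
      have : IsEmpty (-natGame 0).RightMoves := by
        rw [show natGame 0 = 0 from rfl, PGame.neg_zero]; exact PGame.isEmpty_zero_rightMoves
      exact this.elim' j
  | succ b' =>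
      simp only [(natGame_rm_empty a).exists_iff, false_or]
      constructor
      · rintro ⟨j, hj⟩; exact ⟨b', rfl, hj⟩
      · rintro ⟨b'', h, hp⟩
        obtain rfl : b'' = b' := by omega
        exact ⟨PUnit.unit, hp⟩

lemma exists_natSum_left' {b a : ℕ} {p : PGame → Prop} :
    (∃ k, p ((-natGame b + natGame a).moveLeft k)) ↔
      ∃ a', a = a' + 1 ∧ p (-natGame b + natGame a') := by
  rw [exists_leftMoves_add]
  cases a with
  | zero =>
      simp only [(negNat_lm_empty b).exists_iff, false_or]
      exact iff_of_false (fun ⟨i, _⟩ => (PGame.isEmpty_zero_leftMoves).elim' i)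
        (by rintro ⟨a', h, _⟩; omega)
  | succ a' =>
      simp only [(negNat_lm_empty b).exists_iff, false_or]
      constructor
      · rintro ⟨i, hi⟩; exact ⟨a', rfl, hi⟩
      · rintro ⟨a'', h, hp⟩
        obtain rfl : a'' = a' := by omega
        exact ⟨PUnit.unit, hp⟩

lemma exists_natSum_right' {b a : ℕ} {p : PGame → Prop} :
    (∃ k, p ((-natGame b + natGame a).moveRight k)) ↔
      ∃ b', b = b' + 1 ∧ p (-natGame b' + natGame a) := by
  rw [exists_rightMoves_add]
  cases b with
  | zero =>
      simp only [(natGame_rm_empty a).exists_iff, or_false]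
      refine iff_of_false (fun ⟨j, _⟩ => ?_) (by rintro ⟨b', h, _⟩; omega)
      have : IsEmpty (-natGame 0).RightMoves := by
        rw [show natGame 0 = 0 from rfl, PGame.neg_zero]; exact PGame.isEmpty_zero_rightMoves
      exact this.elim' j
  | succ b' =>
      simp only [(natGame_rm_empty a).exists_iff, or_false]
      constructor
      · rintro ⟨j, hj⟩; exact ⟨b', rfl, hj⟩
      · rintro ⟨b'', h, hp⟩
        obtain rfl : b'' = b' := by omega
        exact ⟨PUnit.unit, hp⟩

lemma lw_NS (a b : ℕ) (X : PGame) :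
    LeftWinsGF ((natGame a + -natGame b) + X) ↔
      (a = 0 ∧ IsEmpty X.LeftMoves) ∨
      (∃ a', a = a' + 1 ∧ ¬ RightWinsGF ((natGame a' + -natGame b) + X)) ∨
      (∃ i, ¬ RightWinsGF ((natGame a + -natGame b) + X.moveLeft i)) := by
  rw [lw_add_iff, natSum_lm_empty_iff,
    exists_natSum_left (p := fun G => ¬ RightWinsGF (G + X))]

lemma rw_NS (a b : ℕ) (X : PGame) :
    RightWinsGF ((natGame a + -natGame b) + X) ↔
      (b = 0 ∧ IsEmpty X.RightMoves) ∨
      (∃ b', b = b' + 1 ∧ ¬ LeftWinsGF ((natGame a + -natGame b') + X)) ∨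
      (∃ j, ¬ LeftWinsGF ((natGame a + -natGame b) + X.moveRight j)) := by
  rw [rw_add_iff, natSum_rm_empty_iff,
    exists_natSum_right (p := fun G => ¬ LeftWinsGF (G + X))]

lemma lw_NS' (b a : ℕ) (X : PGame) :
    LeftWinsGF ((-natGame b + natGame a) + X) ↔
      (a = 0 ∧ IsEmpty X.LeftMoves) ∨
      (∃ a', a = a' + 1 ∧ ¬ RightWinsGF ((-natGame b + natGame a') + X)) ∨
      (∃ i, ¬ RightWinsGF ((-natGame b + natGame a) + X.moveLeft i)) := by
  rw [lw_add_iff, natSum_lm_empty_iff',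
    exists_natSum_left' (p := fun G => ¬ RightWinsGF (G + X))]

lemma rw_NS' (b a : ℕ) (X : PGame) :
    RightWinsGF ((-natGame b + natGame a) + X) ↔
      (b = 0 ∧ IsEmpty X.RightMoves) ∨
      (∃ b', b = b' + 1 ∧ ¬ LeftWinsGF ((-natGame b' + natGame a) + X)) ∨
      (∃ j, ¬ LeftWinsGF ((-natGame b + natGame a) + X.moveRight j)) := by
  rw [rw_add_iff, natSum_rm_empty_iff',
    exists_natSum_right' (p := fun G => ¬ LeftWinsGF (G + X))]

end Misere

namespace Misere

/-! ### Dead-end helpers -/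

lemma deadLeftEnd_moveLeft {X : PGame} (h : DeadLeftEnd X) (i : X.LeftMoves) :
    DeadLeftEnd (X.moveLeft i) :=
  fun F hF => h F (hF.trans (Relation.ReflTransGen.single (PGame.IsOption.moveLeft i)))

lemma deadLeftEnd_moveRight {X : PGame} (h : DeadLeftEnd X) (j : X.RightMoves) :
    DeadLeftEnd (X.moveRight j) :=
  fun F hF => h F (hF.trans (Relation.ReflTransGen.single (PGame.IsOption.moveRight j)))

lemma deadRightEnd_moveLeft {X : PGame} (h : DeadRightEnd X) (i : X.LeftMoves) :
    DeadRightEnd (X.moveLeft i) :=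
  fun F hF => h F (hF.trans (Relation.ReflTransGen.single (PGame.IsOption.moveLeft i)))

lemma deadRightEnd_moveRight {X : PGame} (h : DeadRightEnd X) (j : X.RightMoves) :
    DeadRightEnd (X.moveRight j) :=
  fun F hF => h F (hF.trans (Relation.ReflTransGen.single (PGame.IsOption.moveRight j)))

lemma deadEnding_moveLeft {X : PGame} (h : DeadEnding X) (i : X.LeftMoves) :
    DeadEnding (X.moveLeft i) :=
  fun F hF => h F (hF.trans (Relation.ReflTransGen.single (PGame.IsOption.moveLeft i)))

lemma deadEnding_moveRight {X : PGame} (h : DeadEnding X) (j : X.RightMoves) :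
    DeadEnding (X.moveRight j) :=
  fun F hF => h F (hF.trans (Relation.ReflTransGen.single (PGame.IsOption.moveRight j)))

lemma deadLeftEnd_of_deadEnding {X : PGame} (h : DeadEnding X) (hl : IsEmpty X.LeftMoves) :
    DeadLeftEnd X :=
  (h X Relation.ReflTransGen.refl).1 hl

lemma deadRightEnd_of_deadEnding {X : PGame} (h : DeadEnding X) (hr : IsEmpty X.RightMoves) :
    DeadRightEnd X :=
  (h X Relation.ReflTransGen.refl).2 hr

/-! ### Dead-left-end lemma: if `X` is a dead left end and `a ≤ b`, Left does well on
`(natGame a + -natGame b) + X`. -/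

theorem lemLE (a b : ℕ) (X : PGame) (hX : DeadLeftEnd X) :
    (a ≤ b → LeftWinsGF ((natGame a + -natGame b) + X)) ∧
    (a < b → ¬ RightWinsGF ((natGame a + -natGame b) + X)) := by
  constructor
  · intro hab
    cases a with
    | zero => exact (lw_NS 0 b X).2 (Or.inl ⟨rfl, hX X Relation.ReflTransGen.refl⟩)
    | succ a' =>
        exact (lw_NS _ b X).2 (Or.inr (Or.inl ⟨a', rfl,
          (lemLE a' b X hX).2 (by omega)⟩))
  · intro hab hr
    rcases (rw_NS a b X).1 hr with ⟨hb0, _⟩ | ⟨b', rfl, h⟩ | ⟨j, h⟩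
    · omega
    · exact h ((lemLE a b' X hX).1 (by omega))
    · exact h ((lemLE a b (X.moveRight j) (deadLeftEnd_moveRight hX j)).1 (by omega))
  termination_by (X, a + b)
  decreasing_by
    all_goals simp_wf
    · exact Prod.Lex.right _ (by omega)
    · exact Prod.Lex.right _ (by omega)
    · exact Prod.Lex.left _ _ (PGame.Subsequent.moveRight j)

theorem lemRE (a b : ℕ) (X : PGame) (hX : DeadRightEnd X) :
    (b ≤ a → RightWinsGF ((natGame a + -natGame b) + X)) ∧
    (b < a → ¬ LeftWinsGF ((natGame a + -natGame b) + X)) := by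
  constructor
  · intro hab
    cases b with
    | zero => exact (rw_NS a 0 X).2 (Or.inl ⟨rfl, hX X Relation.ReflTransGen.refl⟩)
    | succ b' =>
        exact (rw_NS a _ X).2 (Or.inr (Or.inl ⟨b', rfl,
          (lemRE a b' X hX).2 (by omega)⟩))
  · intro hab hl
    rcases (lw_NS a b X).1 hl with ⟨ha0, _⟩ | ⟨a', rfl, h⟩ | ⟨i, h⟩
    · omega
    · exact h ((lemRE a' b X hX).1 (by omega))
    · exact h ((lemRE a b (X.moveLeft i) (deadRightEnd_moveLeft hX i)).1 (by omega))
  termination_by (X, a + b)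
  decreasing_by
    all_goals simp_wf
    · exact Prod.Lex.right _ (by omega)
    · exact Prod.Lex.right _ (by omega)
    · exact Prod.Lex.left _ _ (PGame.Subsequent.moveLeft i)

theorem lemLE' (a b : ℕ) (X : PGame) (hX : DeadLeftEnd X) :
    (a ≤ b → LeftWinsGF ((-natGame b + natGame a) + X)) ∧
    (a < b → ¬ RightWinsGF ((-natGame b + natGame a) + X)) := by
  constructor
  · intro hab
    cases a with
    | zero => exact (lw_NS' b 0 X).2 (Or.inl ⟨rfl, hX X Relation.ReflTransGen.refl⟩)
    | succ a' =>
        exact (lw_NS' b _ X).2 (Or.inr (Or.inl ⟨a', rfl,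
          (lemLE' a' b X hX).2 (by omega)⟩))
  · intro hab hr
    rcases (rw_NS' b a X).1 hr with ⟨hb0, _⟩ | ⟨b', rfl, h⟩ | ⟨j, h⟩
    · omega
    · exact h ((lemLE' a b' X hX).1 (by omega))
    · exact h ((lemLE' a b (X.moveRight j) (deadLeftEnd_moveRight hX j)).1 (by omega))
  termination_by (X, a + b)
  decreasing_by
    all_goals simp_wf
    · exact Prod.Lex.right _ (by omega)
    · exact Prod.Lex.right _ (by omega)
    · exact Prod.Lex.left _ _ (PGame.Subsequent.moveRight j)

theorem lemRE' (a b : ℕ) (X : PGame) (hX : DeadRightEnd X) :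
    (b ≤ a → RightWinsGF ((-natGame b + natGame a) + X)) ∧
    (b < a → ¬ LeftWinsGF ((-natGame b + natGame a) + X)) := by
  constructor
  · intro hab
    cases b with
    | zero => exact (rw_NS' 0 a X).2 (Or.inl ⟨rfl, hX X Relation.ReflTransGen.refl⟩)
    | succ b' =>
        exact (rw_NS' _ a X).2 (Or.inr (Or.inl ⟨b', rfl,
          (lemRE' a b' X hX).2 (by omega)⟩))
  · intro hab hl
    rcases (lw_NS' b a X).1 hl with ⟨ha0, _⟩ | ⟨a', rfl, h⟩ | ⟨i, h⟩
    · omega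
    · exact h ((lemRE' a' b X hX).1 (by omega))
    · exact h ((lemRE' a b (X.moveLeft i) (deadRightEnd_moveLeft hX i)).1 (by omega))
  termination_by (X, a + b)
  decreasing_by
    all_goals simp_wf
    · exact Prod.Lex.right _ (by omega)
    · exact Prod.Lex.right _ (by omega)
    · exact Prod.Lex.left _ _ (PGame.Subsequent.moveLeft i)

/-! ### Main lemma: `natGame k + -natGame k` is invisible in sums with dead-ending games. -/

theorem mainPos (k : ℕ) (X : PGame) (hX : DeadEnding X) :
    (LeftWinsGF ((natGame k + -natGame k) + X) ↔ LeftWinsGF X) ∧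
    (RightWinsGF ((natGame k + -natGame k) + X) ↔ RightWinsGF X) := by
  constructor
  · constructor
    · intro h
      rcases (lw_NS k k X).1 h with ⟨_, hXl⟩ | ⟨k', rfl, h⟩ | ⟨i, h⟩
      · exact (lw_def X).2 (Or.inl hXl)
      · by_contra hnl
        refine h ((rw_NS k' (k' + 1) X).2 (Or.inr (Or.inl ⟨k', rfl, fun hl => ?_⟩)))
        exact hnl ((mainPos k' X hX).1.1 hl)
      · refine (lw_def X).2 (Or.inr ⟨i, fun hr => h ?_⟩)
        exact (mainPos k (X.moveLeft i) (deadEnding_moveLeft hX i)).2.2 hr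
    · intro h
      rcases (lw_def X).1 h with hXl | ⟨i, hi⟩
      · cases k with
        | zero => exact (lw_NS 0 0 X).2 (Or.inl ⟨rfl, hXl⟩)
        | succ k' =>
            refine (lw_NS _ _ X).2 (Or.inr (Or.inl ⟨k', rfl, ?_⟩))
            exact (lemLE k' (k' + 1) X (deadLeftEnd_of_deadEnding hX hXl)).2 (by omega)
      · refine (lw_NS k k X).2 (Or.inr (Or.inr ⟨i, fun hr => hi ?_⟩))
        exact (mainPos k (X.moveLeft i) (deadEnding_moveLeft hX i)).2.1 hr
  · constructor
    · intro h
      rcases (rw_NS k k X).1 h with ⟨_, hXr⟩ | ⟨k', rfl, h⟩ | ⟨j, h⟩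
      · exact (rw_def X).2 (Or.inl hXr)
      · by_contra hnr
        refine h ((lw_NS (k' + 1) k' X).2 (Or.inr (Or.inl ⟨k', rfl, fun hr => ?_⟩)))
        exact hnr ((mainPos k' X hX).2.1 hr)
      · refine (rw_def X).2 (Or.inr ⟨j, fun hl => h ?_⟩)
        exact (mainPos k (X.moveRight j) (deadEnding_moveRight hX j)).1.2 hl
    · intro h
      rcases (rw_def X).1 h with hXr | ⟨j, hj⟩
      · cases k with
        | zero => exact (rw_NS 0 0 X).2 (Or.inl ⟨rfl, hXr⟩)
        | succ k' =>
            refine (rw_NS _ _ X).2 (Or.inr (Or.inl ⟨k', rfl, ?_⟩))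
            exact (lemRE (k' + 1) k' X (deadRightEnd_of_deadEnding hX hXr)).2 (by omega)
      · refine (rw_NS k k X).2 (Or.inr (Or.inr ⟨j, fun hl => hj ?_⟩))
        exact (mainPos k (X.moveRight j) (deadEnding_moveRight hX j)).1.1 hl
  termination_by (X, k)
  decreasing_by
    all_goals simp_wf
    · exact Prod.Lex.right _ (by omega)
    · exact Prod.Lex.left _ _ (PGame.Subsequent.moveLeft i)
    · exact Prod.Lex.left _ _ (PGame.Subsequent.moveLeft i)
    · exact Prod.Lex.right _ (by omega)
    · exact Prod.Lex.left _ _ (PGame.Subsequent.moveRight j)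
    · exact Prod.Lex.left _ _ (PGame.Subsequent.moveRight j)

theorem mainNeg (k : ℕ) (X : PGame) (hX : DeadEnding X) :
    (LeftWinsGF ((-natGame k + natGame k) + X) ↔ LeftWinsGF X) ∧
    (RightWinsGF ((-natGame k + natGame k) + X) ↔ RightWinsGF X) := by
  constructor
  · constructor
    · intro h
      rcases (lw_NS' k k X).1 h with ⟨_, hXl⟩ | ⟨k', rfl, h⟩ | ⟨i, h⟩
      · exact (lw_def X).2 (Or.inl hXl)
      · by_contra hnl
        refine h ((rw_NS' (k' + 1) k' X).2 (Or.inr (Or.inl ⟨k', rfl, fun hl => ?_⟩)))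
        exact hnl ((mainNeg k' X hX).1.1 hl)
      · refine (lw_def X).2 (Or.inr ⟨i, fun hr => h ?_⟩)
        exact (mainNeg k (X.moveLeft i) (deadEnding_moveLeft hX i)).2.2 hr
    · intro h
      rcases (lw_def X).1 h with hXl | ⟨i, hi⟩
      · cases k with
        | zero => exact (lw_NS' 0 0 X).2 (Or.inl ⟨rfl, hXl⟩)
        | succ k' =>
            refine (lw_NS' _ _ X).2 (Or.inr (Or.inl ⟨k', rfl, ?_⟩))
            exact (lemLE' k' (k' + 1) X (deadLeftEnd_of_deadEnding hX hXl)).2 (by omega)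
      · refine (lw_NS' k k X).2 (Or.inr (Or.inr ⟨i, fun hr => hi ?_⟩))
        exact (mainNeg k (X.moveLeft i) (deadEnding_moveLeft hX i)).2.1 hr
  · constructor
    · intro h
      rcases (rw_NS' k k X).1 h with ⟨_, hXr⟩ | ⟨k', rfl, h⟩ | ⟨j, h⟩
      · exact (rw_def X).2 (Or.inl hXr)
      · by_contra hnr
        refine h ((lw_NS' k' (k' + 1) X).2 (Or.inr (Or.inl ⟨k', rfl, fun hr => ?_⟩)))
        exact hnr ((mainNeg k' X hX).2.1 hr)
      · refine (rw_def X).2 (Or.inr ⟨j, fun hl => h ?_⟩)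
        exact (mainNeg k (X.moveRight j) (deadEnding_moveRight hX j)).1.2 hl
    · intro h
      rcases (rw_def X).1 h with hXr | ⟨j, hj⟩
      · cases k with
        | zero => exact (rw_NS' 0 0 X).2 (Or.inl ⟨rfl, hXr⟩)
        | succ k' =>
            refine (rw_NS' _ _ X).2 (Or.inr (Or.inl ⟨k', rfl, ?_⟩))
            exact (lemRE' (k' + 1) k' X (deadRightEnd_of_deadEnding hX hXr)).2 (by omega)
      · refine (rw_NS' k k X).2 (Or.inr (Or.inr ⟨j, fun hl => hj ?_⟩))
        exact (mainNeg k (X.moveRight j) (deadEnding_moveRight hX j)).1.1 hl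
  termination_by (X, k)
  decreasing_by
    all_goals simp_wf
    · exact Prod.Lex.right _ (by omega)
    · exact Prod.Lex.left _ _ (PGame.Subsequent.moveLeft i)
    · exact Prod.Lex.left _ _ (PGame.Subsequent.moveLeft i)
    · exact Prod.Lex.right _ (by omega)
    · exact Prod.Lex.left _ _ (PGame.Subsequent.moveRight j)
    · exact Prod.Lex.left _ _ (PGame.Subsequent.moveRight j)

/-! ### `0 + X` has the same winners as `X`. -/

theorem zeroAdd (X : PGame) :
    (LeftWinsGF (0 + X) ↔ LeftWinsGF X) ∧ (RightWinsGF (0 + X) ↔ RightWinsGF X) := by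
  constructor
  · rw [lw_add_iff, lw_def X]
    constructor
    · rintro (⟨_, h⟩ | ⟨i, _⟩ | ⟨j, hj⟩)
      · exact Or.inl h
      · exact (PGame.isEmpty_zero_leftMoves).elim' i
      · exact Or.inr ⟨j, fun hr => hj ((zeroAdd (X.moveLeft j)).2.2 hr)⟩
    · rintro (h | ⟨j, hj⟩)
      · exact Or.inl ⟨PGame.isEmpty_zero_leftMoves, h⟩
      · exact Or.inr (Or.inr ⟨j, fun hr => hj ((zeroAdd (X.moveLeft j)).2.1 hr)⟩)
  · rw [rw_add_iff, rw_def X]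
    constructor
    · rintro (⟨_, h⟩ | ⟨i, _⟩ | ⟨j, hj⟩)
      · exact Or.inl h
      · exact (PGame.isEmpty_zero_rightMoves).elim' i
      · exact Or.inr ⟨j, fun hl => hj ((zeroAdd (X.moveRight j)).1.2 hl)⟩
    · rintro (h | ⟨j, hj⟩)
      · exact Or.inl ⟨PGame.isEmpty_zero_rightMoves, h⟩
      · exact Or.inr (Or.inr ⟨j, fun hl => hj ((zeroAdd (X.moveRight j)).1.1 hl)⟩)
  termination_by X
  decreasing_by
    all_goals simp_wf
    all_goals first
      | exact PGame.Subsequent.moveLeft j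
      | exact PGame.Subsequent.moveRight j

lemma outcome_congr {G H : PGame} (h1 : LeftWinsGF G ↔ LeftWinsGF H)
    (h2 : RightWinsGF G ↔ RightWinsGF H) : outcome G = outcome H := by
  unfold outcome
  by_cases hl : LeftWinsGF H
  · by_cases hr : RightWinsGF H
    · rw [if_pos (h1.2 hl), if_pos hl, if_pos (h2.2 hr), if_pos hr]
    · rw [if_pos (h1.2 hl), if_pos hl, if_neg (fun h => hr (h2.1 h)), if_neg hr]
  · by_cases hr : RightWinsGF H
    · rw [if_neg (fun h => hl (h1.1 h)), if_neg hl, if_pos (h2.2 hr), if_pos hr]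
    · rw [if_neg (fun h => hl (h1.1 h)), if_neg hl, if_neg (fun h => hr (h2.1 h)), if_neg hr]

end Misere

open Misere SetTheory PGame

/-- every canonical-form integer plus its conjugate is equivalent to 0 mod E. -/
theorem stmt6 (n : ℤ) :
    equivMod E (intGame n + -intGame n) 0 := by
  intro X hX
  have hXE : DeadEnding X := hX
  have hz := Misere.zeroAdd X
  rcases le_or_gt 0 n with h | h
  · have e : intGame n = natGame n.toNat := if_pos h
    rw [e]
    have hm := Misere.mainPos n.toNat X hXE
    exact Misere.outcome_congr (hm.1.trans hz.1.symm) (hm.2.trans hz.2.symm)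
  · have e : intGame n = -natGame (-n).toNat := if_neg (not_le.mpr h)
    rw [e, SetTheory.PGame.neg_neg]
    have hm := Misere.mainNeg (-n).toNat X hXE
    exact Misere.outcome_congr (hm.1.trans hz.1.symm) (hm.2.trans hz.2.symm)
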